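/- Let q > 1, τ* > 0, δ ≥ 0, and consider the homogeneous-treatment-effect objective M(τ) = |τ* - τ| + δ·(2 + |τ|^q)^(1/q). Then τ = τ* is a global minimizer of M if and only if δ·(τ*)^(q-1)·(2 + (τ*)^q)^(1/q - 1) ≤ 1, equivalently δ ≤ (2/(τ*)^q + 1)^(1 - 1/q). -/

import Mathlib

open Filter Topology

theorem stmt_6 (q τs δ : ℝ) (hq : 1 < q) (hτ : 0 < τs) (hδ : 0 ≤ δ)
    (M : ℝ → ℝ)
    (hM : M = fun τ : ℝ => |τs - τ| + δ * (2 + |τ| ^ q) ^ (1 / q)) :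
    ((∀ τ : ℝ, M τs ≤ M τ) ↔ δ * τs ^ (q - 1) * (2 + τs ^ q) ^ (1 / q - 1) ≤ 1) ∧
    ((∀ τ : ℝ, M τs ≤ M τ) ↔ δ ≤ (2 / τs ^ q + 1) ^ (1 - 1 / q)) := by
  have hq0 : (0:ℝ) < q := lt_trans one_pos hq
  have hq1 : (1:ℝ) ≤ q := le_of_lt hq
  have hexp : (0:ℝ) ≤ 1 - 1/q := by
    have : 1/q ≤ 1 := by rw [div_le_one hq0]; exact hq1
    linarith
  have hτq : 0 < τs ^ q := Real.rpow_pos_of_pos hτ q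
  have h2τ : (0:ℝ) < 2 + τs ^ q := by positivity
  set c : ℝ := τs ^ (q-1) * (2 + τs ^ q) ^ (1/q - 1) with hc
  have hcpos : 0 < c := mul_pos (Real.rpow_pos_of_pos hτ _) (Real.rpow_pos_of_pos h2τ _)
  set g : ℝ → ℝ := fun t => (2 + |t| ^ q) ^ (1/q) with hgdef
  have hrw : ∀ a : ℝ, 0 < a →
      a ^ (q-1) * (2 + a ^ q) ^ (1/q - 1) = (a ^ q / (2 + a ^ q)) ^ (1 - 1/q) := by
    intro a ha
    have h2a : (0:ℝ) < 2 + a ^ q := by positivity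
    have e1 : a ^ (q-1) = (a ^ q) ^ (1 - 1/q) := by
      rw [← Real.rpow_mul ha.le]
      congr 1
      field_simp
    have e2 : (2 + a ^ q) ^ (1/q - 1) = ((2 + a ^ q)⁻¹) ^ (1 - 1/q) := by
      rw [Real.inv_rpow h2a.le, ← Real.rpow_neg h2a.le]
      ring_nf
    rw [e1, e2, ← Real.mul_rpow (by positivity) (by positivity),
      div_eq_mul_inv (a ^ q) (2 + a ^ q)]
  have hderiv : ∀ t : ℝ, 0 < t →
      HasDerivAt g (t ^ (q-1) * (2 + t ^ q) ^ (1/q - 1)) t := by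
    intro t ht
    have h2t : (0:ℝ) < 2 + t ^ q := by positivity
    have h1 : HasDerivAt (fun s : ℝ => 2 + s ^ q) (q * t ^ (q-1)) t := by
      simpa using (Real.hasDerivAt_rpow_const (p := q) (Or.inl (ne_of_gt ht))).const_add 2
    have h2 : HasDerivAt (fun s : ℝ => (2 + s ^ q) ^ (1/q))
        ((q * t ^ (q-1)) * (1/q) * (2 + t ^ q) ^ (1/q - 1)) t :=
      h1.rpow_const (Or.inl (ne_of_gt h2t))
    have heq : (fun s : ℝ => (2 + s ^ q) ^ (1/q)) =ᶠ[nhds t] g := by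
      filter_upwards [Ioi_mem_nhds ht] with s hs
      simp [hgdef, abs_of_pos (Set.mem_Ioi.mp hs)]
    have h3 := h2.congr_of_eventuallyEq heq.symm
    refine h3.congr_deriv ?_
    rw [mul_comm q, mul_assoc _ q, mul_one_div_cancel hq0.ne', mul_one]
  have hmono : ∀ a : ℝ, 0 < a → a ≤ τs →
      a ^ (q-1) * (2 + a ^ q) ^ (1/q - 1) ≤ c := by
    intro a ha hle
    have h2a : (0:ℝ) < 2 + a ^ q := by positivity
    rw [hrw a ha, hc, hrw τs hτ]
    apply Real.rpow_le_rpow (by positivity) _ hexp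
    rw [div_le_div_iff₀ h2a h2τ]
    have haq : a ^ q ≤ τs ^ q := Real.rpow_le_rpow ha.le hle hq0.le
    nlinarith
  have hgcont : Continuous g := by
    apply Continuous.rpow_const
    · exact continuous_const.add (continuous_abs.rpow_const fun x => Or.inr hq0.le)
    · intro x; right; positivity
  have key1 : ∀ σ : ℝ, 0 ≤ σ → σ ≤ τs → g τs - g σ ≤ c * (τs - σ) := by
    intro σ hσ0 hστ
    have hmon : MonotoneOn (fun t => c * t - g t) (Set.Icc 0 τs) := by
      apply monotoneOn_of_deriv_nonneg (convex_Icc 0 τs)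
      · exact (continuous_const.mul continuous_id).sub hgcont |>.continuousOn
      · intro x hx
        rw [interior_Icc] at hx
        exact ((hasDerivAt_id x).const_mul c |>.sub (hderiv x hx.1)).differentiableAt.differentiableWithinAt
      · intro x hx
        rw [interior_Icc] at hx
        have hd : HasDerivAt (fun t => c * t - g t)
            (c - x ^ (q-1) * (2 + x ^ q) ^ (1/q - 1)) x := by
          exact (((hasDerivAt_id x).const_mul c).sub (hderiv x hx.1)).congr_deriv (by ring)
        rw [hd.deriv]
        linarith [hmono x hx.1 hx.2.le]
    have := hmon ⟨hσ0, hστ⟩ ⟨hτ.le, le_refl τs⟩ hστ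
    simp only at this
    linarith
  have gmono : ∀ a b : ℝ, 0 ≤ a → a ≤ b → g a ≤ g b := by
    intro a b ha hab
    apply Real.rpow_le_rpow (by positivity) _ (by positivity)
    have : |a| ^ q ≤ |b| ^ q := by
      apply Real.rpow_le_rpow (abs_nonneg a) _ hq0.le
      rw [abs_of_nonneg ha, abs_of_nonneg (ha.trans hab)]; exact hab
    linarith
  have main : (∀ τ : ℝ, M τs ≤ M τ) ↔ δ * c ≤ 1 := by
    constructor
    · intro hmin
      have hds : HasDerivAt g c τs := by rw [hc]; exact hderiv τs hτ
      have hslope : Tendsto (slope g τs) (𝓝[<] τs) (𝓝 c) :=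
        (hasDerivAt_iff_tendsto_slope.mp hds).mono_left
          (nhdsWithin_mono _ fun x hx => ne_of_lt hx)
      have T : Tendsto (fun τ => δ * slope g τs τ) (𝓝[<] τs) (𝓝 (δ * c)) :=
        hslope.const_mul δ
      have hev : ∀ᶠ τ in 𝓝[<] τs, δ * slope g τs τ ≤ 1 := by
        filter_upwards [self_mem_nhdsWithin] with τ hτ'
        have hlt : τ < τs := hτ'
        have hm := hmin τ
        simp only [hM] at hm
        rw [sub_self, abs_zero, zero_add, abs_of_pos (by linarith : (0:ℝ) < τs - τ)] at hm
        rw [slope_def_field, ← mul_div_assoc,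
          div_le_iff_of_neg (by linarith : τ - τs < 0), mul_sub, one_mul]
        have e1 : (2 + |τs| ^ q) ^ (1/q) = g τs := rfl
        have e2 : (2 + |τ| ^ q) ^ (1/q) = g τ := rfl
        rw [e1, e2] at hm
        linarith
      exact le_of_tendsto T hev
    · intro hle τ
      simp only [hM]
      rw [sub_self, abs_zero, zero_add]
      set σ := |τ| with hσ
      have h1 : (2 + |τ| ^ q) ^ (1/q) = g σ := by simp [hgdef, hσ, abs_abs]
      have h2 : |τs - σ| ≤ |τs - τ| := by
        calc |τs - σ| = |abs τs - abs τ| := by rw [abs_of_pos hτ]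
        _ ≤ |τs - τ| := abs_abs_sub_abs_le_abs_sub τs τ
      rw [h1]
      have hgτs : δ * (2 + |τs| ^ q) ^ (1/q) = δ * g τs := rfl
      rw [hgτs]
      rcases le_or_gt τs σ with hcase | hcase
      · have := gmono τs σ hτ.le hcase
        have h3 : 0 ≤ |τs - τ| := abs_nonneg _
        nlinarith
      · have hk := key1 σ (abs_nonneg τ) hcase.le
        have h4 : τs - σ ≤ |τs - τ| := by
          have : |τs - σ| = τs - σ := abs_of_pos (by linarith)
          linarith [h2, this]
        nlinarith [mul_le_mul_of_nonneg_left hk hδ, mul_le_mul_of_nonneg_right hle (by linarith : (0:ℝ) ≤ τs - σ)]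
  constructor
  · rw [main, mul_assoc]
  · rw [main]
    set A : ℝ := (2 / τs ^ q + 1) ^ (1 - 1/q) with hA
    have hx : (0:ℝ) < 2 / τs ^ q + 1 := by positivity
    have hxeq : 2 / τs ^ q + 1 = (2 + τs ^ q) / τs ^ q := by
      field_simp
    have hcx : c = ((2 / τs ^ q + 1)) ^ (1/q - 1) := by
      rw [hc, hrw τs hτ, hxeq]
      rw [show (1/q - 1 : ℝ) = -(1 - 1/q) by ring, Real.rpow_neg (by positivity),
        ← Real.inv_rpow (by positivity)]
      congr 1
      rw [inv_div]
    have hcA : c * A = 1 := by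
      rw [hcx, hA, ← Real.rpow_add hx]
      norm_num
    have hApos : 0 < A := Real.rpow_pos_of_pos hx _
    constructor
    · intro h
      have : δ * c ≤ A * c := by rw [mul_comm A c, hcA]; exact h
      exact le_of_mul_le_mul_right this hcpos
    · intro h
      calc δ * c ≤ A * c := mul_le_mul_of_nonneg_right h hcpos.le
      _ = 1 := by rw [mul_comm, hcA]
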